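/- Let 𝒜 be a relational structure over τ with universe A, let 𝒜_V be a view structure for 𝒜, and let O = {X_1,…,X_m} ⊆ A be such that every X_j is domain restricted in 𝒜 and every singleton {X_j} is tp-covered in 𝒜_V. Let ℬ be a structure over τ, let 1 ≤ i ≤ m, let h* be a homomorphism from 𝒜 to ℬ, and set a_j = h*(X_j) for j < i. Let ℬ_i be obtained from ℬ by replacing dom(X_j)^ℬ with {(a_j)} for every j < i (all other relations unchanged), and let ℬ_V be any τ_V-structure legal with respect to 𝒜_V and (𝒜,ℬ_i). Then dom(X_i)^{GAC(𝒜_V,ℬ_V)} (where dom(X_i) also denotes the base view of the domain constraint of X_i) equals the set { (a) : there exists a homomorphism h from 𝒜 to ℬ with h(X_j) = a_j for all j < i and h(X_i) = a }, and this set is nonempty. -/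

import Mathlib

open Set

/-- A relational structure over vocabulary `σ` (with arities `ar`) and universe `A`. -/
structure RelStruct (σ : Type) (ar : σ → ℕ) (A : Type) where
  rel : ∀ R : σ, Set (Fin (ar R) → A)

variable {σ : Type} {ar : σ → ℕ} {A B : Type}

/-- `h` is a homomorphism from `𝒜` to `ℬ`. -/
def IsHom (𝒜 : RelStruct σ ar A) (ℬ : RelStruct σ ar B) (h : A → B) : Prop :=
  ∀ R : σ, ∀ t ∈ 𝒜.rel R, (fun i => h (t i)) ∈ ℬ.rel R

/-- `𝒜^ℬ[X]`: the set of restrictions to `X` of homomorphisms from `𝒜` to `ℬ`. -/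
def homRestrict (𝒜 : RelStruct σ ar A) (ℬ : RelStruct σ ar B) (X : Set A) :
    Set (↥X → B) :=
  { g | ∃ h : A → B, IsHom 𝒜 ℬ h ∧ g = X.restrict h }

/-- `𝒜'` is a (relation-wise) substructure of `𝒜`. -/
def SubStructOf (𝒜' 𝒜 : RelStruct σ ar A) : Prop :=
  ∀ R : σ, 𝒜'.rel R ⊆ 𝒜.rel R

/-- `𝒜'` is a core of `𝒜`. -/
def IsCoreOf (𝒜' 𝒜 : RelStruct σ ar A) : Prop :=
  SubStructOf 𝒜' 𝒜 ∧ (∃ h : A → A, IsHom 𝒜 𝒜' h) ∧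
    ∀ 𝒜'' : RelStruct σ ar A, SubStructOf 𝒜'' 𝒜' → 𝒜'' ≠ 𝒜' →
      ¬ ∃ h : A → A, IsHom 𝒜 𝒜'' h

/-- `X` is domain restricted in `𝒜`, with (unary) domain-constraint symbol `dR`. -/
def DomRestricted (𝒜 : RelStruct σ ar A) (dR : σ) (X : A) : Prop :=
  ar dR = 1 ∧ 𝒜.rel dR = {fun _ => X}

/-- A view structure (v-structure) for `𝒜`, over the vocabulary `ν` of views:
each view `v` has a set of variables (the entries of its single defining tuple),
and every constraint of `𝒜` has a base view. -/
structure ViewStruct (σ : Type) (ar : σ → ℕ) (A : Type) (𝒜 : RelStruct σ ar A)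
    (ν : Type) where
  vars : ν → Set A
  base : ∀ R : σ, ∀ t : Fin (ar R) → A, t ∈ 𝒜.rel R → ν
  base_vars : ∀ R t ht, vars (base R t ht) = Set.range t

variable {ν : Type} {𝒜 : RelStruct σ ar A}

/-- Restriction of an assignment on `W` to a subset `S ⊆ W`. -/
def restr {W S : Set A} (hSW : S ⊆ W) (g : ↥W → B) : ↥S → B :=
  fun x => g ⟨x.1, hSW x.2⟩

/-- `BV` (a τ_V-structure, given as a set of assignments for each view) is legal
w.r.t. `V` and the instance `(𝒜,ℬ)`. -/
def Legal (𝒜 : RelStruct σ ar A) (ℬ : RelStruct σ ar B)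
    (V : ViewStruct σ ar A 𝒜 ν) (BV : ∀ v : ν, Set (↥(V.vars v) → B)) : Prop :=
  (∀ v : ν, homRestrict 𝒜 ℬ (V.vars v) ⊆ BV v) ∧
  (∀ (R : σ) (t : Fin (ar R) → A) (ht : t ∈ 𝒜.rel R),
     ∀ g ∈ BV (V.base R t ht),
       (fun i => g ⟨t i, by rw [V.base_vars]; exact Set.mem_range_self i⟩) ∈ ℬ.rel R)

/-- Pairwise consistency of a family of view relations w.r.t. `V`. -/
def PWConsistent (V : ViewStruct σ ar A 𝒜 ν)
    (BV' : ∀ v : ν, Set (↥(V.vars v) → B)) : Prop :=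
  ∀ v1 v2 : ν, (V.vars v1 ∩ V.vars v2).Nonempty →
    restr Set.inter_subset_left '' BV' v1 = restr Set.inter_subset_right '' BV' v2

/-- `GAC V BV`: the largest pairwise consistent sub-structure of `BV`
(defined as the union of all pairwise consistent sub-structures). -/
def GAC (V : ViewStruct σ ar A 𝒜 ν) (BV : ∀ v : ν, Set (↥(V.vars v) → B)) :
    ∀ v : ν, Set (↥(V.vars v) → B) :=
  fun v => { g | ∃ BV' : ∀ w : ν, Set (↥(V.vars w) → B),
    (∀ w, BV' w ⊆ BV w) ∧ PWConsistent V BV' ∧ g ∈ BV' v }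

/-- `h` is a homomorphism from the v-structure `𝒜_V` to `ℬ_V` (reading the single
tuple of each view as an assignment). -/
def IsViewHom (V : ViewStruct σ ar A 𝒜 ν) (BV : ∀ v : ν, Set (↥(V.vars v) → B))
    (h : A → B) : Prop :=
  ∀ v : ν, (V.vars v).restrict h ∈ BV v

/-- The hyperedges of the hypergraph `ℋ_𝒜` of a structure `𝒜`. -/
def structEdges (𝒜 : RelStruct σ ar A) : Set (Set A) :=
  { e | ∃ (R : σ) (t : Fin (ar R) → A), t ∈ 𝒜.rel R ∧ e = Set.range t }

/-- The hyperedges of the hypergraph `ℋ_{𝒜_V}` of a v-structure. -/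
def viewEdges (V : ViewStruct σ ar A 𝒜 ν) : Set (Set A) := Set.range V.vars

/-- `H1 ≤ H2`: every hyperedge of `H1` is contained in some hyperedge of `H2`. -/
def HypLE (H1 H2 : Set (Set A)) : Prop := ∀ e ∈ H1, ∃ e' ∈ H2, e ⊆ e'

/-- `T` is a join tree of the hypergraph with hyperedges `H`. -/
def IsJoinTree (H : Set (Set A)) (T : SimpleGraph ↥H) : Prop :=
  T.IsTree ∧ ∀ (X : A) (e1 e2 : ↥H), X ∈ (e1 : Set A) → X ∈ (e2 : Set A) →
    ∀ p : T.Walk e1 e2, p.IsPath → ∀ e ∈ p.support, X ∈ (e : Set A)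

/-- A hypergraph is acyclic iff it has a join tree. -/
def AcyclicHyp (H : Set (Set A)) : Prop := ∃ T : SimpleGraph ↥H, IsJoinTree H T

/-- `(H1, H2)` has a tree projection. -/
def HasTreeProjection (H1 H2 : Set (Set A)) : Prop :=
  ∃ Ha : Set (Set A), AcyclicHyp Ha ∧ HypLE H1 Ha ∧ HypLE Ha H2

/-- `𝒜 ⊎ 𝕊_O`, where the single tuple `t` (of length `r`) enumerates `O`. -/
def addRel (𝒜 : RelStruct σ ar A) (r : ℕ) (t : Fin r → A) :
    RelStruct (σ ⊕ Unit) (Sum.elim ar fun _ => r) A where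
  rel := fun R => match R with
    | Sum.inl R => 𝒜.rel R
    | Sum.inr _ => {t}

/-- `𝒜 ⊎ ⨄_{X ∈ O} 𝕊_{{X}}`. -/
def addSingles (𝒜 : RelStruct σ ar A) (O : Set A) :
    RelStruct (σ ⊕ ↥O) (Sum.elim ar fun _ => 1) A where
  rel := fun R => match R with
    | Sum.inl R => 𝒜.rel R
    | Sum.inr X => {fun _ => (X : A)}

/-- `O` is tp-covered in the v-structure `V`. -/
def TpCovered (V : ViewStruct σ ar A 𝒜 ν) (O : Set A) : Prop :=
  ∃ (r : ℕ) (t : Fin r → A), Function.Injective t ∧ Set.range t = O ∧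
    ∃ 𝒜' : RelStruct (σ ⊕ Unit) (Sum.elim ar fun _ => r) A,
      IsCoreOf 𝒜' (addRel 𝒜 r t) ∧
      HasTreeProjection (structEdges 𝒜') (viewEdges V)

/-- The assignments on `W` that satisfy all constraints of `𝒜` whose variables
all lie in `W` (interpreted in `ℬ`). -/
def solsOn (𝒜 : RelStruct σ ar A) (ℬ : RelStruct σ ar B) (W : Set A) :
    Set (↥W → B) :=
  { g | ∀ (R : σ) (t : Fin (ar R) → A), t ∈ 𝒜.rel R →
      ∀ hsub : ∀ i, t i ∈ W, (fun i => g ⟨t i, hsub i⟩) ∈ ℬ.rel R }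

/-- The constraints of `𝒜`. -/
def Cst (𝒜 : RelStruct σ ar A) : Type := Σ R : σ, {t : Fin (ar R) → A // t ∈ 𝒜.rel R}

/-- The variables of a constraint. -/
def cstVars (c : Cst 𝒜) : Set A := Set.range c.2.1

/-- Index type for the views of `ℓ-tw_k`: the nonempty sets of at most `k` variables. -/
def twIdx (A : Type) (k : ℕ) : Type := {W : Set A // W.Nonempty ∧ W.Finite ∧ W.ncard ≤ k}

/-- The v-structure `ℓ-tw_k(𝒜)`. -/
def twViews (𝒜 : RelStruct σ ar A) (k : ℕ) :
    ViewStruct σ ar A 𝒜 (twIdx A k ⊕ Cst 𝒜) where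
  vars := Sum.elim (fun W => W.1) cstVars
  base := fun R t ht => Sum.inr ⟨R, ⟨t, ht⟩⟩
  base_vars := fun _ _ _ => rfl

/-- The legal structure `r-tw_k(𝒜,ℬ)`. -/
def rtw (𝒜 : RelStruct σ ar A) (ℬ : RelStruct σ ar B) (k : ℕ) :
    ∀ v : twIdx A k ⊕ Cst 𝒜, Set (↥((twViews 𝒜 k).vars v) → B) :=
  fun v => solsOn 𝒜 ℬ ((twViews 𝒜 k).vars v)

/-- Index type for the views of `ℓ-hw_k`: nonempty sets of at most `k` constraints. -/
def hwIdx (𝒜 : RelStruct σ ar A) (k : ℕ) : Type :=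
  {C : Finset (Cst 𝒜) // C.Nonempty ∧ C.card ≤ k}

/-- The variables occurring in a set of constraints. -/
def hwVars (C : Finset (Cst 𝒜)) : Set A := ⋃ c ∈ C, cstVars c

/-- The v-structure `ℓ-hw_k(𝒜)` (for `k ≥ 1`). -/
def hwViews (𝒜 : RelStruct σ ar A) (k : ℕ) (hk : 1 ≤ k) :
    ViewStruct σ ar A 𝒜 (hwIdx 𝒜 k) where
  vars := fun C => hwVars C.1
  base := fun R t ht => ⟨{⟨R, ⟨t, ht⟩⟩}, Finset.singleton_nonempty _, le_trans (le_of_eq (Finset.card_singleton _)) hk⟩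
  base_vars := fun R t ht => by
    ext x; simp only [hwVars, cstVars, Set.mem_iUnion]
    exact ⟨fun ⟨c, hc, hx⟩ => by obtain rfl : c = _ := Finset.mem_singleton.mp hc; exact hx,
      fun hx => ⟨⟨R, ⟨t, ht⟩⟩, Finset.mem_singleton_self _, hx⟩⟩

/-- The legal structure `r-hw_k(𝒜,ℬ)`: each view holds the solutions of its subproblem. -/
def rhw (𝒜 : RelStruct σ ar A) (ℬ : RelStruct σ ar B) (k : ℕ) (hk : 1 ≤ k) :
    ∀ C : hwIdx 𝒜 k, Set (↥((hwViews 𝒜 k hk).vars C) → B) :=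
  fun C => { g | ∀ (c : Cst 𝒜) (hc : c ∈ C.1),
    (fun i => g ⟨c.2.1 i, Set.mem_iUnion₂.mpr ⟨c, hc, Set.mem_range_self i⟩⟩) ∈ ℬ.rel c.1 }

/-- Replace the relation of symbol `dR` in `ℬ` by `s`. -/
noncomputable def replaceRel (ℬ : RelStruct σ ar B) (dR : σ)
    (s : Set (Fin (ar dR) → B)) : RelStruct σ ar B :=
  letI := Classical.decEq σ
  ⟨Function.update ℬ.rel dR s⟩

/-- Replace the relation of view `v0` by `s`. -/
noncomputable def updateView (V : ViewStruct σ ar A 𝒜 ν)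
    (BV : ∀ v : ν, Set (↥(V.vars v) → B)) (v0 : ν) (s : Set (↥(V.vars v0) → B)) :
    ∀ v : ν, Set (↥(V.vars v) → B) :=
  letI := Classical.decEq ν
  Function.update BV v0 s

/-- The Gaifman graph of a structure. -/
def gaifman (𝒜 : RelStruct σ ar A) : SimpleGraph A where
  Adj u v := u ≠ v ∧ ∃ (R : σ) (t : Fin (ar R) → A),
      t ∈ 𝒜.rel R ∧ u ∈ Set.range t ∧ v ∈ Set.range t
  symm := ⟨fun u v h => ⟨h.1.symm, by obtain ⟨-, R, t, ht, hu, hv⟩ := h; exact ⟨R, t, ht, hv, hu⟩⟩⟩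
  loopless := ⟨fun u h => h.1 rfl⟩

/-- The `m × n` grid graph. -/
def gridGraph (m n : ℕ) : SimpleGraph (Fin m × Fin n) where
  Adj u v := Nat.dist u.1.1 v.1.1 + Nat.dist u.2.1 v.2.1 = 1
  symm := ⟨by intro u v h; simpa [Nat.dist_comm] using h⟩
  loopless := ⟨by intro u h; simp [Nat.dist_self] at h⟩

/-- Two nodes share a hyperedge of `H`. -/
def sharesEdge (H : Set (Set A)) (u w : A) : Prop := ∃ e ∈ H, u ∈ e ∧ w ∈ e

/-- The hypergraph with hyperedges `H` is connected (over the whole universe). -/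
def HypConnected (H : Set (Set A)) : Prop :=
  ∀ x y : A, Relation.ReflTransGen (sharesEdge H) x y

/-! ### Auxiliary machinery: gluing pairwise-consistent relations along a join tree -/

section TreeGlueAux

variable {α β ι : Type}

/-- Two partial assignments agree on the intersection of their domains. -/
def AgreesOn (E : ι → Set α) {i j : ι} (x : ↥(E i) → β) (y : ↥(E j) → β) : Prop :=
  ∀ a (h1 : a ∈ E i) (h2 : a ∈ E j), x ⟨a, h1⟩ = y ⟨a, h2⟩

lemma AgreesOn.symm' {E : ι → Set α} {i j : ι} {x : ↥(E i) → β} {y : ↥(E j) → β}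
    (h : AgreesOn E x y) : AgreesOn E y x := fun a h2 h1 => (h a h1 h2).symm

variable (E : ι → Set α) (SS : ∀ i : ι, Set (↥(E i) → β)) (hne : ∀ i, (SS i).Nonempty)

/-- Choose an element of `SS j` agreeing with `x` if possible. -/
noncomputable def stp (i j : ι) (x : ↥(E i) → β) : ↥(E j) → β :=
  letI := Classical.dec (∃ y ∈ SS j, AgreesOn E x y)
  if h : ∃ y ∈ SS j, AgreesOn E x y then h.choose else (hne j).some

lemma stp_mem (i j : ι) (x : ↥(E i) → β) : stp E SS hne i j x ∈ SS j := by
  unfold stp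
  split
  · next h => exact h.choose_spec.1
  · exact (hne j).some_mem

lemma stp_agrees (hK : ∀ i j (x : ↥(E i) → β), x ∈ SS i → ∃ y ∈ SS j, AgreesOn E x y)
    (i j : ι) (x : ↥(E i) → β) (hx : x ∈ SS i) : AgreesOn E x (stp E SS hne i j x) := by
  unfold stp
  split
  · next h => exact h.choose_spec.2
  · next h => exact absurd (hK i j x hx) h

variable {T : SimpleGraph ι}

/-- Propagate a partial assignment along a walk. -/
noncomputable def glueWalk : ∀ {u w : ι}, T.Walk u w → (↥(E u) → β) → (↥(E w) → β)
  | _, _, SimpleGraph.Walk.nil, x => x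
  | _, _, SimpleGraph.Walk.cons _ p, x => glueWalk p (stp E SS hne _ _ x)

lemma glueWalk_mem : ∀ {u w : ι} (p : T.Walk u w) (x : ↥(E u) → β),
    x ∈ SS u → glueWalk E SS hne p x ∈ SS w
  | _, _, SimpleGraph.Walk.nil, _, hx => hx
  | _, _, SimpleGraph.Walk.cons _ p, x, _ =>
      glueWalk_mem p _ (stp_mem E SS hne _ _ x)

lemma glueWalk_concat : ∀ {u v w : ι} (p : T.Walk u v) (h : T.Adj v w) (x : ↥(E u) → β),
    glueWalk E SS hne (p.concat h) x = stp E SS hne v w (glueWalk E SS hne p x)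
  | _, _, _, SimpleGraph.Walk.nil, _, _ => rfl
  | _, _, _, SimpleGraph.Walk.cons h' p, h, x => by
      rw [SimpleGraph.Walk.concat_cons]
      exact glueWalk_concat p h _

include hne in
theorem treeGlue (htree : T.IsTree)
    (hK : ∀ i j (x : ↥(E i) → β), x ∈ SS i → ∃ y ∈ SS j, AgreesOn E x y)
    (hjoin : ∀ (a : α) (e1 e2 : ι), a ∈ E e1 → a ∈ E e2 →
      ∀ p : T.Walk e1 e2, p.IsPath → ∀ e ∈ p.support, a ∈ E e)
    (r : ι) (x0 : ↥(E r) → β) (hx0 : x0 ∈ SS r) :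
    ∃ s : ∀ i, ↥(E i) → β, s r = x0 ∧ (∀ i, s i ∈ SS i) ∧
      ∀ i j : ι, AgreesOn E (s i) (s j) := by
  classical
  have hpath := htree.existsUnique_path
  let pt : ∀ i, T.Walk r i := fun i => (hpath r i).choose
  have hptIsPath : ∀ i, (pt i).IsPath := fun i => (hpath r i).choose_spec.1
  have hptUniq : ∀ i (q : T.Walk r i), q.IsPath → q = pt i :=
    fun i q hq => (hpath r i).choose_spec.2 q hq
  set s : ∀ i, ↥(E i) → β := fun i => glueWalk E SS hne (pt i) x0 with hs
  have hsr : s r = x0 := by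
    have h1 : (SimpleGraph.Walk.nil : T.Walk r r) = pt r :=
      hptUniq r _ SimpleGraph.Walk.IsPath.nil
    show glueWalk E SS hne (pt r) x0 = x0
    rw [← h1]
    rfl
  have hsmem : ∀ i, s i ∈ SS i := fun i => glueWalk_mem E SS hne (pt i) x0 hx0
  have hadj : ∀ u w, T.Adj u w → AgreesOn E (s u) (s w) := by
    intro u w h
    by_cases hw : w ∈ (pt u).support
    · have hdrop : (pt u).dropUntil w hw = SimpleGraph.Walk.cons h.symm SimpleGraph.Walk.nil := by
        have h1 : ((pt u).dropUntil w hw).IsPath := (hptIsPath u).dropUntil hw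
        have h2 : (SimpleGraph.Walk.cons h.symm (SimpleGraph.Walk.nil : T.Walk u u)).IsPath :=
          SimpleGraph.Walk.IsPath.nil.cons (by simp [h.ne'])
        obtain ⟨p', hp', hup⟩ := hpath w u
        rw [hup _ h1, hup _ h2]
      have htake : (pt u).takeUntil w hw = pt w := hptUniq w _ ((hptIsPath u).takeUntil hw)
      have hpu : pt u = (pt w).concat h.symm := by
        conv_lhs => rw [← (pt u).take_spec hw]
        rw [htake, hdrop]
        rfl
      have hsu : s u = stp E SS hne w u (s w) := by
        show glueWalk E SS hne (pt u) x0 = _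
        rw [hpu, glueWalk_concat]
      rw [hsu]
      exact (stp_agrees E SS hne hK w u (s w) (hsmem w)).symm'
    · have hconcat : ((pt u).concat h).IsPath := by
        rw [SimpleGraph.Walk.isPath_def, SimpleGraph.Walk.support_concat,
          List.nodup_append]
        refine ⟨(hptIsPath u).support_nodup, List.nodup_singleton w, ?_⟩
        intro x hx y hx' hxy
        rw [List.mem_singleton] at hx'
        rw [hxy, hx'] at hx
        exact hw hx
      have hpw : pt w = (pt u).concat h := (hptUniq w _ hconcat).symm
      have hsw : s w = stp E SS hne u w (s u) := by
        show glueWalk E SS hne (pt w) x0 = _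
        rw [hpw, glueWalk_concat]
      rw [hsw]
      exact stp_agrees E SS hne hK u w (s u) (hsmem u)
  have hchain : ∀ (a : α) {u w : ι} (p : T.Walk u w), (∀ e ∈ p.support, a ∈ E e) →
      ∀ (h1 : a ∈ E u) (h2 : a ∈ E w), s u ⟨a, h1⟩ = s w ⟨a, h2⟩ := by
    intro a u w p
    induction p with
    | nil => intro _ h1 h2; rfl
    | @cons u v w h p ih =>
      intro hsup h1 h2
      have hmid : a ∈ E v := hsup v (by
        rw [SimpleGraph.Walk.support_cons]
        exact List.mem_cons_of_mem _ p.start_mem_support)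
      refine (hadj u v h a h1 hmid).trans (ih ?_ hmid h2)
      intro e he
      exact hsup e (by rw [SimpleGraph.Walk.support_cons]; exact List.mem_cons_of_mem _ he)
  refine ⟨s, hsr, hsmem, ?_⟩
  intro i j a h1 h2
  obtain ⟨p, hp⟩ := (hpath i j).exists
  exact hchain a p (hjoin a i j h1 h2 p hp) h1 h2

end TreeGlueAux

/-- The family of restrictions of homomorphisms is pairwise consistent. -/
lemma pwConsistent_homRestrict {σ : Type} {ar : σ → ℕ} {A B ν : Type}
    {𝒜 : RelStruct σ ar A} (V : ViewStruct σ ar A 𝒜 ν) (ℬ' : RelStruct σ ar B) :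
    PWConsistent V (fun w => homRestrict 𝒜 ℬ' (V.vars w)) := by
  intro v1 v2 _
  ext x
  simp only [Set.mem_image]
  constructor
  · rintro ⟨g, ⟨h, hh, rfl⟩, rfl⟩
    exact ⟨(V.vars v2).restrict h, ⟨h, hh, rfl⟩, rfl⟩
  · rintro ⟨g, ⟨h, hh, rfl⟩, rfl⟩
    exact ⟨(V.vars v1).restrict h, ⟨h, hh, rfl⟩, rfl⟩

/-- Pairwise consistency is preserved under unions. -/
lemma pwConsistent_union {σ : Type} {ar : σ → ℕ} {A B ν : Type}
    {𝒜 : RelStruct σ ar A} {V : ViewStruct σ ar A 𝒜 ν}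
    {B1 B2 : ∀ v : ν, Set (↥(V.vars v) → B)}
    (h1 : PWConsistent V B1) (h2 : PWConsistent V B2) :
    PWConsistent V (fun w => B1 w ∪ B2 w) := by
  intro v1 v2 hint
  simp only [Set.image_union, h1 v1 v2 hint, h2 v1 v2 hint]

/-- during the enumeration, after fixing the values of
`X_1, …, X_{i-1}` according to a solution `h*` and enforcing GAC on any legal
structure for the modified instance, the domain view of `X_i` holds exactly the
values of `X_i` in solutions of the original instance extending the current
partial assignment, and it is nonempty. -/
theorem statement16 [Finite σ] [Finite A] [Finite B] [Finite ν]
    (𝒜 : RelStruct σ ar A) (har : ∀ R : σ, 1 ≤ ar R)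
    (V : ViewStruct σ ar A 𝒜 ν)
    (m : ℕ) (Xs : Fin m → A) (hinj : Function.Injective Xs)
    (dSym : Fin m → σ) (hdom : ∀ j, DomRestricted 𝒜 (dSym j) (Xs j))
    (hti : ∀ j, (fun _ => Xs j : Fin (ar (dSym j)) → A) ∈ 𝒜.rel (dSym j))
    (htp : ∀ j, TpCovered V {Xs j})
    (ℬ : RelStruct σ ar B) (i : Fin m)
    (hstar : A → B) (hhom : IsHom 𝒜 ℬ hstar)
    (ℬi : RelStruct σ ar B)
    (hBi1 : ∀ j, j < i → ℬi.rel (dSym j) = {fun _ => hstar (Xs j)})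
    (hBi2 : ∀ R : σ, (∀ j, j < i → R ≠ dSym j) → ℬi.rel R = ℬ.rel R)
    (BV : ∀ v : ν, Set (↥(V.vars v) → B))
    (hleg : Legal 𝒜 ℬi V BV) :
    GAC V BV (V.base (dSym i) (fun _ => Xs i) (hti i)) =
      { g | ∃ a : B, g = (fun _ => a) ∧
          ∃ h : A → B, IsHom 𝒜 ℬ h ∧
            (∀ j, j < i → h (Xs j) = hstar (Xs j)) ∧ h (Xs i) = a } ∧
    (GAC V BV (V.base (dSym i) (fun _ => Xs i) (hti i))).Nonempty := by
  classical
  set v0 := V.base (dSym i) (fun _ => Xs i) (hti i) with hv0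
  have hXiv0 : Xs i ∈ V.vars v0 := by
    rw [V.base_vars]; exact Set.mem_range_self ⟨0, har _⟩
  have hv0sub : ∀ a ∈ V.vars v0, a = Xs i := by
    rw [V.base_vars]; rintro a ⟨k, rfl⟩; rfl
  have toB : ∀ h : A → B, IsHom 𝒜 ℬi h →
      IsHom 𝒜 ℬ h ∧ ∀ j, j < i → h (Xs j) = hstar (Xs j) := by
    intro h hh
    constructor
    · intro R u hu
      by_cases hR : ∀ j, j < i → R ≠ dSym j
      · rw [← hBi2 R hR]; exact hh R u hu
      · push_neg at hR
        obtain ⟨j, hj, rfl⟩ := hR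
        have h1 := hh _ u hu
        rw [hBi1 j hj, Set.mem_singleton_iff] at h1
        rw [h1]
        exact hhom (dSym j) _ (hti j)
    · intro j hj
      have h1 := hh (dSym j) _ (hti j)
      rw [hBi1 j hj, Set.mem_singleton_iff] at h1
      exact congrFun h1 ⟨0, har _⟩
  have toBi : ∀ h : A → B, IsHom 𝒜 ℬ h → (∀ j, j < i → h (Xs j) = hstar (Xs j)) →
      IsHom 𝒜 ℬi h := by
    intro h hh hmatch R u hu
    by_cases hR : ∀ j, j < i → R ≠ dSym j
    · rw [hBi2 R hR]; exact hh R u hu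
    · push_neg at hR
      obtain ⟨j, hj, rfl⟩ := hR
      have hu' : u = fun _ => Xs j := by
        have h2 := (hdom j).2
        rw [h2, Set.mem_singleton_iff] at hu
        exact hu
      rw [hBi1 j hj, Set.mem_singleton_iff, hu']
      funext k
      exact hmatch j hj
  have hstarBi : IsHom 𝒜 ℬi hstar := toBi hstar hhom (fun j _ => rfl)
  have hset : GAC V BV v0 = { g : ↥(V.vars v0) → B | ∃ a : B, g = (fun _ => a) ∧
      ∃ h : A → B, IsHom 𝒜 ℬ h ∧ (∀ j, j < i → h (Xs j) = hstar (Xs j)) ∧ h (Xs i) = a } := by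
    apply Set.Subset.antisymm
    · rintro g ⟨BV', hsub, hPC, hgmem⟩
      set BV'' : ∀ w : ν, Set (↥(V.vars w) → B) :=
        fun w => BV' w ∪ homRestrict 𝒜 ℬi (V.vars w) with hBV''
      have hsub'' : ∀ w, BV'' w ⊆ BV w :=
        fun w => Set.union_subset (hsub w) (hleg.1 w)
      have hPC'' : PWConsistent V BV'' :=
        pwConsistent_union hPC (pwConsistent_homRestrict V ℬi)
      have hne'' : ∀ w, (BV'' w).Nonempty :=
        fun w => ⟨(V.vars w).restrict hstar, Or.inr ⟨hstar, hstarBi, rfl⟩⟩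
      have hg'' : g ∈ BV'' v0 := Or.inl hgmem
      obtain ⟨r, t, tinj, trange, 𝒜', ⟨hsubA, ⟨c, hc⟩, -⟩, htpj⟩ := htp i
      obtain ⟨Ha, ⟨T, htree, hjoin⟩, hle1, hle2⟩ := htpj
      have htX : ∀ k, t k = Xs i := by
        intro k
        have h1 : t k ∈ Set.range t := Set.mem_range_self k
        rw [trange] at h1
        exact h1
      have hrpos : Nonempty (Fin r) := by
        by_contra hcon
        rw [not_nonempty_iff] at hcon
        rw [Set.range_eq_empty t] at trange
        exact (Set.singleton_ne_empty (Xs i)) trange.symm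
      obtain ⟨k0⟩ := hrpos
      have hct : (fun k => c (t k)) ∈ 𝒜'.rel (Sum.inr ()) := hc (Sum.inr ()) t rfl
      have hctt : (fun k => c (t k)) = t := hsubA (Sum.inr ()) hct
      have hcX : c (Xs i) = Xs i := by
        have h1 := congrFun hctt k0
        rwa [htX k0] at h1
      have htmem : t ∈ 𝒜'.rel (Sum.inr ()) := hctt ▸ hct
      have hXe : {Xs i} ∈ structEdges 𝒜' := ⟨Sum.inr (), t, htmem, trange.symm⟩
      obtain ⟨estar0, hestar0, hXsub⟩ := hle1 _ hXe
      have hXi_estar : Xs i ∈ estar0 := hXsub rfl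
      have hview : ∀ e : ↥Ha, ∃ w : ν, (e : Set A) ⊆ V.vars w := by
        intro e
        obtain ⟨e', he', hsube⟩ := hle2 e e.2
        obtain ⟨w, rfl⟩ := he'
        exact ⟨w, hsube⟩
      choose vw hvw using hview
      set E : ↥Ha → Set A := fun e => (e : Set A) with hE
      set SS : ∀ e : ↥Ha, Set (↥(E e) → B) :=
        fun e => restr (hvw e) '' BV'' (vw e) with hSS
      have hSne : ∀ e, (SS e).Nonempty := fun e => (hne'' (vw e)).image _
      have hK : ∀ e1 e2 (x : ↥(E e1) → B), x ∈ SS e1 → ∃ y ∈ SS e2, AgreesOn E x y := by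
        rintro e1 e2 x ⟨G1, hG1, rfl⟩
        by_cases hint : (E e1 ∩ E e2).Nonempty
        · have hvint : (V.vars (vw e1) ∩ V.vars (vw e2)).Nonempty :=
            hint.mono (Set.inter_subset_inter (hvw e1) (hvw e2))
          have hmem : restr Set.inter_subset_left G1 ∈
              restr Set.inter_subset_right '' BV'' (vw e2) := by
            rw [← hPC'' (vw e1) (vw e2) hvint]
            exact Set.mem_image_of_mem _ hG1
          obtain ⟨G2, hG2, heq⟩ := hmem
          refine ⟨restr (hvw e2) G2, Set.mem_image_of_mem _ hG2, ?_⟩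
          intro a h1 h2
          exact (congrFun heq ⟨a, hvw e1 h1, hvw e2 h2⟩).symm
        · obtain ⟨y, hy⟩ := hSne e2
          exact ⟨y, hy, fun a h1 h2 => absurd ⟨a, h1, h2⟩ hint⟩
      set eS : ↥Ha := ⟨estar0, hestar0⟩ with heS
      have hvint0 : (V.vars v0 ∩ V.vars (vw eS)).Nonempty :=
        ⟨Xs i, hXiv0, hvw eS hXi_estar⟩
      have hmem0 : restr Set.inter_subset_left g ∈
          restr Set.inter_subset_right '' BV'' (vw eS) := by
        rw [← hPC'' v0 (vw eS) hvint0]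
        exact Set.mem_image_of_mem _ hg''
      obtain ⟨G0, hG0, heq0⟩ := hmem0
      set x0 : ↥(E eS) → B := restr (hvw eS) G0 with hx0def
      have hx0 : x0 ∈ SS eS := Set.mem_image_of_mem _ hG0
      have hx0val : x0 ⟨Xs i, hXi_estar⟩ = g ⟨Xs i, hXiv0⟩ :=
        congrFun heq0 ⟨Xs i, hXiv0, hvw eS hXi_estar⟩
      obtain ⟨s, hs0, hsmem, hsagree⟩ := treeGlue E SS hSne htree hK hjoin eS x0 hx0
      set h0 : A → B := fun a =>
        if ha : ∃ e : ↥Ha, a ∈ E e then s ha.choose ⟨a, ha.choose_spec⟩ else hstar a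
        with hh0
      have h0spec : ∀ (e : ↥Ha) (a : A) (ha : a ∈ E e), h0 a = s e ⟨a, ha⟩ := by
        intro e a ha
        have hex : ∃ e' : ↥Ha, a ∈ E e' := ⟨e, ha⟩
        show (if ha' : ∃ e' : ↥Ha, a ∈ E e' then s ha'.choose ⟨a, ha'.choose_spec⟩
          else hstar a) = s e ⟨a, ha⟩
        rw [dif_pos hex]
        exact hsagree hex.choose e a hex.choose_spec ha
      set h : A → B := fun a => h0 (c a) with hhdef
      have hBih : IsHom 𝒜 ℬi h := by
        intro R u hu
        have hu' : (fun k => c (u k)) ∈ 𝒜'.rel (Sum.inl R) := hc (Sum.inl R) u hu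
        have hmA : (fun k => c (u k)) ∈ 𝒜.rel R := hsubA (Sum.inl R) hu'
        have hedge : Set.range (fun k => c (u k)) ∈ structEdges 𝒜' :=
          ⟨Sum.inl R, _, hu', rfl⟩
        obtain ⟨e0, he0, hsube⟩ := hle1 _ hedge
        set e : ↥Ha := ⟨e0, he0⟩ with he
        have hcu : ∀ k, c (u k) ∈ E e := fun k => hsube (Set.mem_range_self k)
        obtain ⟨G, hG, hGeq⟩ := hsmem e
        set w := V.base R (fun k => c (u k)) hmA with hwdef
        have hwvars : ∀ k, c (u k) ∈ V.vars w := by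
          intro k
          rw [V.base_vars]
          exact Set.mem_range_self k
        have hint : (V.vars (vw e) ∩ V.vars w).Nonempty :=
          ⟨c (u ⟨0, har R⟩), hvw e (hcu ⟨0, har R⟩), hwvars ⟨0, har R⟩⟩
        have hmemw : restr Set.inter_subset_left G ∈
            restr Set.inter_subset_right '' BV'' w := by
          rw [← hPC'' (vw e) w hint]
          exact Set.mem_image_of_mem _ hG
        obtain ⟨G', hG', heqw⟩ := hmemw
        have hlegal2 := hleg.2 R (fun k => c (u k)) hmA G' (hsub'' w hG')
        have htuple : (fun k => h (u k)) = fun k => G' ⟨c (u k), hwvars k⟩ := by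
          funext k
          have e1 : h (u k) = s e ⟨c (u k), hcu k⟩ := h0spec e (c (u k)) (hcu k)
          have e2 : s e ⟨c (u k), hcu k⟩ = G ⟨c (u k), hvw e (hcu k)⟩ :=
            (congrFun hGeq ⟨c (u k), hcu k⟩).symm
          have e3 : G ⟨c (u k), hvw e (hcu k)⟩ = G' ⟨c (u k), hwvars k⟩ :=
            (congrFun heqw ⟨c (u k), hvw e (hcu k), hwvars k⟩).symm
          rw [e1, e2, e3]
        rw [htuple]
        exact hlegal2
      obtain ⟨hhB, hmatch⟩ := toB h hBih
      refine ⟨g ⟨Xs i, hXiv0⟩, ?_, h, hhB, hmatch, ?_⟩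
      · funext x
        show g x = g ⟨Xs i, hXiv0⟩
        have hx : x = (⟨Xs i, hXiv0⟩ : ↥(V.vars v0)) := Subtype.ext (hv0sub x.1 x.2)
        rw [hx]
      · show h0 (c (Xs i)) = g ⟨Xs i, hXiv0⟩
        rw [hcX]
        calc h0 (Xs i) = s eS ⟨Xs i, hXi_estar⟩ := h0spec eS (Xs i) hXi_estar
          _ = x0 ⟨Xs i, hXi_estar⟩ := by rw [hs0]
          _ = g ⟨Xs i, hXiv0⟩ := hx0val
    · rintro g ⟨a, rfl, h, hh, hmatch, hXi⟩
      refine ⟨fun w => homRestrict 𝒜 ℬi (V.vars w), hleg.1, pwConsistent_homRestrict V ℬi, ?_⟩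
      refine ⟨h, toBi h hh hmatch, ?_⟩
      funext x
      show a = h x.1
      rw [hv0sub x.1 x.2, hXi]
  refine ⟨hset, ?_⟩
  rw [hset]
  exact ⟨fun _ => hstar (Xs i), hstar (Xs i), rfl, hstar, hhom, fun j _ => rfl, rfl⟩
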